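/- (Omega-limit sets of asymptotically invariant collections) Let μ be a finite Borel measure on a compact separable metric space X and f : X → X a measurable map. Let U = (U(x))_{x∈U} be an asymptotically invariant collection defined on a μ-ergodic component U, and let A ⊂ X be the attractor associated to U (the compact set with ω_f(x) = A for μ-almost every x ∈ U). Then there is a compact set A_U ⊂ A such that ω_{f,U}(x) = A_U for μ-almost every x ∈ U. Furthermore, if U has positive frequency, then there is also a compact set A_{+,U} ⊂ A_U such that ω_{+,f,U}(x) = A_{+,U} for μ-almost every x ∈ U. -/

import Mathlib

open Set Metric Topology Filter MeasureTheory

/-- A `μ`-ergodic component for `f`: an invariant set of positive measure all of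
whose invariant subsets have zero or full relative measure.  (`μ` is not
assumed `f`-invariant.) -/
def ErgodicComponent {X : Type*} [MeasurableSpace X] (f : X → X) (μ : Measure X)
    (U : Set X) : Prop :=
  f ⁻¹' U = U ∧ 0 < μ U ∧
    ∀ V : Set X, V ⊆ U → f ⁻¹' V = V → μ V = 0 ∨ μ (U \ V) = 0

/-- The ω-limit set of the point `x` under `f`: the set of accumulation points
of the forward orbit of `x`. -/
def omegaLimitPt {X : Type*} [TopologicalSpace X] (f : X → X) (x : X) : Set X :=
  {p | ∃ φ : ℕ → ℕ, StrictMono φ ∧ Tendsto (fun n => f^[φ n] x) atTop (𝓝 p)}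

/-- A (minimal, Milnor-type) `μ`-attractor: a compact positively invariant set
whose basin `{x | ω_f(x) ⊆ A}` has positive measure, while the basin of every
compact positively invariant proper subset has zero measure. -/
def IsAttractor {X : Type*} [TopologicalSpace X] [MeasurableSpace X]
    (f : X → X) (μ : Measure X) (A : Set X) : Prop :=
  IsCompact A ∧ f '' A ⊆ A ∧ 0 < μ {x | omegaLimitPt f x ⊆ A} ∧
    ∀ A' : Set X, A' ⊂ A → IsCompact A' → f '' A' ⊆ A' →
      μ {x | omegaLimitPt f x ⊆ A'} = 0

/-- The positive orbit of `x` under `f`. -/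
def posOrbit {X : Type*} (f : X → X) (x : X) : Set X :=
  Set.range fun n : ℕ => f^[n] x

/-- An asymptotically invariant collection `𝒰 = (𝒰 x)_{x ∈ U}` of subsets of the
positive orbits: each `𝒰 x` is visited infinitely often, and `𝒰 x` and
`𝒰 (f x)` eventually agree along the orbit. -/
def AsympInvariant {X : Type*} (f : X → X) (U : Set X) (𝒰 : X → Set X) : Prop :=
  (∀ x ∈ U, 𝒰 x ⊆ posOrbit f x) ∧
  (∀ x ∈ U, {j : ℕ | f^[j] x ∈ 𝒰 x}.Infinite) ∧
  (∀ x ∈ U, ∃ N : ℕ, ∀ n ≥ N,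
    𝒰 x ∩ posOrbit f (f^[n] x) = 𝒰 (f x) ∩ posOrbit f (f^[n] x))

/-- The omega-`𝒰` limit set of `x`: accumulation points of the set `𝒰 x`
visited along the orbit. -/
def omegaU {X : Type*} [TopologicalSpace X] (f : X → X) (𝒰 : X → Set X)
    (x : X) : Set X :=
  {p | ∃ φ : ℕ → ℕ, StrictMono φ ∧ (∀ j, f^[φ j] x ∈ 𝒰 x) ∧
    Tendsto (fun j => f^[φ j] x) atTop (𝓝 p)}

/-- The set of `𝒰`-frequently visited points of the orbit of `x`: points every
neighborhood of which is visited by `𝒰 x` with positive upper frequency. -/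
noncomputable def omegaPlusU {X : Type*} [TopologicalSpace X] (f : X → X)
    (𝒰 : X → Set X) (x : X) : Set X :=
  {p | ∀ V ∈ 𝓝 p, 0 < Filter.limsup (fun n : ℕ =>
    (({j : ℕ | 1 ≤ j ∧ j ≤ n ∧ f^[j] x ∈ 𝒰 x ∩ V}.ncard : ℝ) / n)) Filter.atTop}

/-- `𝒰` has positive frequency at `x`. -/
noncomputable def PosFreq {X : Type*} (f : X → X) (𝒰 : X → Set X) (x : X) : Prop :=
  0 < Filter.limsup (fun n : ℕ =>
    (({j : ℕ | 1 ≤ j ∧ j ≤ n ∧ f^[j] x ∈ 𝒰 x}.ncard : ℝ) / n)) Filter.atTop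


/-! ### Auxiliary machinery -/

section Aux
variable {X : Type*} [MetricSpace X] (f : X → X) (𝒰 : X → Set X)

set_option linter.unusedSectionVars false

/-- Tail pieces of the `𝒰`-marked orbit. -/
def orbTail (x : X) (N : ℕ) : Set X :=
  (fun j => f^[j] x) '' {j | N ≤ j ∧ f^[j] x ∈ 𝒰 x}

lemma orbTail_anti (x : X) {N N' : ℕ} (h : N ≤ N') :
    orbTail f 𝒰 x N' ⊆ orbTail f 𝒰 x N := by
  rintro y ⟨j, ⟨hj, hm⟩, rfl⟩
  exact ⟨j, ⟨h.trans hj, hm⟩, rfl⟩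

lemma omegaU_eq_iInter (x : X) :
    omegaU f 𝒰 x = ⋂ N, closure (orbTail f 𝒰 x N) := by
  ext p
  constructor
  · rintro ⟨φ, hmono, hmem, htend⟩
    refine mem_iInter.2 fun N => mem_closure_of_tendsto htend ?_
    filter_upwards [eventually_ge_atTop N] with j hj
    exact ⟨φ j, ⟨hj.trans hmono.le_apply, hmem j⟩, rfl⟩
  · intro hp
    have H : ∀ N k : ℕ, ∃ j, N < j ∧ f^[j] x ∈ 𝒰 x ∧ dist (f^[j] x) p < 1/(k+1) := by
      intro N k
      have h1 : p ∈ closure (orbTail f 𝒰 x (N+1)) := mem_iInter.1 hp (N+1)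
      rw [Metric.mem_closure_iff] at h1
      obtain ⟨y, ⟨j, ⟨hjN, hjmem⟩, rfl⟩, hdist⟩ := h1 (1/(k+1)) (by positivity)
      exact ⟨j, hjN, hjmem, by rwa [dist_comm]⟩
    choose g h1 h2 h3 using H
    set φ : ℕ → ℕ := fun k => Nat.rec (g 0 0) (fun k prev => g prev (k+1)) k with hφ
    have hφs : ∀ k, φ (k+1) = g (φ k) (k+1) := fun k => rfl
    have hmono : StrictMono φ := strictMono_nat_of_lt_succ (fun k => by rw [hφs]; exact h1 _ _)
    have hmem : ∀ k, f^[φ k] x ∈ 𝒰 x := by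
      intro k; cases k with
      | zero => exact h2 0 0
      | succ k => rw [hφs]; exact h2 _ _
    have hdist : ∀ k : ℕ, dist (f^[φ k] x) p < 1/(k+1) := by
      intro k; cases k with
      | zero => exact h3 0 0
      | succ k => rw [hφs]; exact h3 _ _
    refine ⟨φ, hmono, hmem, ?_⟩
    rw [Metric.tendsto_atTop]
    intro ε hε
    obtain ⟨K, hK⟩ := exists_nat_one_div_lt hε
    refine ⟨K, fun n hn => ?_⟩
    have h4 : (1:ℝ)/(n+1) ≤ 1/(K+1) := by
      apply one_div_le_one_div_of_le (by positivity)
      exact_mod_cast Nat.succ_le_succ hn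
    exact lt_of_lt_of_le (hdist n) (h4.trans hK.le)

lemma omegaU_isClosed (x : X) : IsClosed (omegaU f 𝒰 x) := by
  rw [omegaU_eq_iInter]
  exact isClosed_iInter fun _ => isClosed_closure

lemma omegaU_subset_omegaLimitPt (x : X) : omegaU f 𝒰 x ⊆ omegaLimitPt f x := by
  rintro p ⟨φ, h1, h2, h3⟩
  exact ⟨φ, h1, h3⟩

lemma mem_posOrbit_iterate (x : X) {N j : ℕ} (h : N ≤ j) :
    f^[j] x ∈ posOrbit f (f^[N] x) :=
  ⟨j - N, by
    show f^[j-N] (f^[N] x) = f^[j] x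
    rw [← Function.iterate_add_apply, Nat.sub_add_cancel h]⟩

lemma iff_mem_U {x : X} {N₀ : ℕ}
    (hN₀ : ∀ n ≥ N₀, 𝒰 x ∩ posOrbit f (f^[n] x) = 𝒰 (f x) ∩ posOrbit f (f^[n] x))
    {m : ℕ} (hm : N₀ ≤ m) : f^[m] x ∈ 𝒰 x ↔ f^[m] x ∈ 𝒰 (f x) := by
  have h := hN₀ N₀ le_rfl
  have hy : f^[m] x ∈ posOrbit f (f^[N₀] x) := mem_posOrbit_iterate f x hm
  constructor
  · intro h1; exact ((Set.ext_iff.1 h _).1 ⟨h1, hy⟩).1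
  · intro h1; exact ((Set.ext_iff.1 h _).2 ⟨h1, hy⟩).1

lemma orbTail_shift {x : X} {N₀ : ℕ}
    (hN₀ : ∀ n ≥ N₀, 𝒰 x ∩ posOrbit f (f^[n] x) = 𝒰 (f x) ∩ posOrbit f (f^[n] x))
    {M : ℕ} (hM : N₀ ≤ M) :
    orbTail f 𝒰 (f x) M = orbTail f 𝒰 x (M+1) := by
  ext y; constructor
  · rintro ⟨j, ⟨hj, hjm⟩, rfl⟩
    have h1 : f^[j+1] x ∈ 𝒰 (f x) := by rw [Function.iterate_succ_apply]; exact hjm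
    exact ⟨j+1, ⟨Nat.succ_le_succ hj,
      (iff_mem_U f 𝒰 hN₀ ((hM.trans hj).trans (Nat.le_succ j))).2 h1⟩,
      Function.iterate_succ_apply f j x⟩
  · rintro ⟨m, ⟨hm, hmm⟩, rfl⟩
    obtain ⟨j, rfl⟩ : ∃ j, m = j + 1 := ⟨m - 1, by omega⟩
    refine ⟨j, ⟨by omega, ?_⟩, (Function.iterate_succ_apply f j x).symm⟩
    show f^[j] (f x) ∈ 𝒰 (f x)
    rw [← Function.iterate_succ_apply]
    exact (iff_mem_U f 𝒰 hN₀ (by omega)).1 hmm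

lemma omegaU_apply_eq {x : X} {N₀ : ℕ}
    (hN₀ : ∀ n ≥ N₀, 𝒰 x ∩ posOrbit f (f^[n] x) = 𝒰 (f x) ∩ posOrbit f (f^[n] x)) :
    omegaU f 𝒰 (f x) = omegaU f 𝒰 x := by
  rw [omegaU_eq_iInter, omegaU_eq_iInter]
  ext p
  simp only [mem_iInter]
  constructor
  · intro h N
    have h1 := h (max N N₀)
    rw [orbTail_shift f 𝒰 hN₀ (le_max_right _ _)] at h1
    exact closure_mono (orbTail_anti f 𝒰 x (by omega : N ≤ max N N₀ + 1)) h1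
  · intro h M
    have h1 := h (max M N₀ + 1)
    rw [← orbTail_shift f 𝒰 hN₀ (le_max_right M N₀)] at h1
    exact closure_mono (orbTail_anti f 𝒰 (f x) (le_max_left M N₀)) h1

/-! #### Counting machinery for `omegaPlusU` -/

noncomputable def cntU (x : X) (V : Set X) (n : ℕ) : ℕ :=
  (@Finset.filter _ (fun j => f^[j] x ∈ 𝒰 x ∩ V) (Classical.decPred _) (Finset.Icc 1 n)).card

lemma ncard_eq_cntU (x : X) (V : Set X) (n : ℕ) :
    {j : ℕ | 1 ≤ j ∧ j ≤ n ∧ f^[j] x ∈ 𝒰 x ∩ V}.ncard = cntU f 𝒰 x V n := by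
  rw [show {j : ℕ | 1 ≤ j ∧ j ≤ n ∧ f^[j] x ∈ 𝒰 x ∩ V}
      = ((@Finset.filter _ (fun j => f^[j] x ∈ 𝒰 x ∩ V) (Classical.decPred _)
          (Finset.Icc 1 n)) : Finset ℕ) by
    ext j; simp [and_assoc], Set.ncard_coe_finset]
  rfl

lemma cntU_le (x : X) (V : Set X) (n : ℕ) : cntU f 𝒰 x V n ≤ n := by
  have h := @Finset.card_filter_le ℕ (Finset.Icc 1 n) (fun j => f^[j] x ∈ 𝒰 x ∩ V)
    (Classical.decPred _)
  rw [Nat.card_Icc] at h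
  simpa [cntU] using h

lemma cntU_mono_set (x : X) {V V' : Set X} (h : V ⊆ V') (n : ℕ) :
    cntU f 𝒰 x V n ≤ cntU f 𝒰 x V' n := by
  unfold cntU
  refine Finset.card_le_card fun j hj => ?_
  simp only [Finset.mem_filter] at hj ⊢
  exact ⟨hj.1, hj.2.1, h hj.2.2⟩

/-- Abstract positive-frequency property of a counting function. -/
def FreqN (c : ℕ → ℕ) : Prop := ∃ ε > (0:ℝ), ∀ N : ℕ, ∃ n ≥ N, ε * n ≤ (c n : ℝ)

lemma pos_limsup_iff_freq (x : X) (V : Set X) :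
    (0 < limsup (fun n : ℕ => (cntU f 𝒰 x V n : ℝ)/n) atTop) ↔ FreqN (cntU f 𝒰 x V) := by
  set u : ℕ → ℝ := fun n => (cntU f 𝒰 x V n : ℝ)/n with hu
  have hub : ∀ n : ℕ, u n ≤ 1 := by
    intro n
    rcases Nat.eq_zero_or_pos n with h0 | h0
    · simp [hu, h0]
    · rw [hu]
      have hn : (0:ℝ) < n := by exact_mod_cast h0
      rw [div_le_one hn]
      exact_mod_cast cntU_le f 𝒰 x V n
  have hlb : ∀ n : ℕ, 0 ≤ u n := fun n => by positivity
  constructor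
  · intro h
    have hco : IsCoboundedUnder (· ≤ ·) atTop u :=
      Filter.IsBoundedUnder.isCoboundedUnder_le ⟨0, Filter.eventually_map.2 (.of_forall hlb)⟩
    have hf := Filter.frequently_lt_of_lt_limsup hco (half_lt_self h)
    refine ⟨_, half_pos h, fun N => ?_⟩
    obtain ⟨n, hn, hn2⟩ := (Filter.frequently_atTop.1 hf) (max N 1)
    refine ⟨n, le_trans (le_max_left _ _) hn, ?_⟩
    have hnpos : (0:ℝ) < n := by
      have h1 : (1:ℕ) ≤ n := le_trans (le_max_right _ _) hn
      exact_mod_cast h1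
    exact ((lt_div_iff₀ hnpos).1 hn2).le
  · rintro ⟨ε, hε, h⟩
    have hfreq : ∃ᶠ n in atTop, ε ≤ u n := by
      rw [Filter.frequently_atTop]
      intro N
      obtain ⟨n, hn, hn2⟩ := h (max N 1)
      have hnpos : (0:ℝ) < n := by
        have h1 : (1:ℕ) ≤ n := le_trans (le_max_right _ _) hn
        exact_mod_cast h1
      exact ⟨n, le_trans (le_max_left _ _) hn, (le_div_iff₀ hnpos).2 hn2⟩
    have hb : IsBoundedUnder (· ≤ ·) atTop u :=
      ⟨1, Filter.eventually_map.2 (.of_forall hub)⟩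
    exact lt_of_lt_of_le hε (Filter.le_limsup_of_frequently_le hfreq hb)

lemma freqN_transfer {c d : ℕ → ℕ} (C : ℕ) (hcomp : ∀ n, c n ≤ d n + C)
    (h : FreqN c) : FreqN d := by
  obtain ⟨ε, hε, h⟩ := h
  refine ⟨ε/2, half_pos hε, fun N => ?_⟩
  obtain ⟨n, hn, h2⟩ := h (max N ⌈2*(C:ℝ)/ε⌉₊)
  refine ⟨n, le_trans (le_max_left _ _) hn, ?_⟩
  have h3 : (2*(C:ℝ)/ε) ≤ n := le_trans (Nat.le_ceil _)
    (by exact_mod_cast le_trans (le_max_right _ _) hn)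
  have h4 : 2*(C:ℝ) ≤ ε * n := by rw [div_le_iff₀ hε] at h3; linarith
  have h5 : (c n : ℝ) ≤ d n + C := by exact_mod_cast hcomp n
  linarith

lemma mem_omegaPlusU_iff {p x : X} :
    p ∈ omegaPlusU f 𝒰 x ↔ ∀ V ∈ 𝓝 p, FreqN (cntU f 𝒰 x V) := by
  have hfun : ∀ V : Set X,
      (fun n : ℕ => (({j : ℕ | 1 ≤ j ∧ j ≤ n ∧ f^[j] x ∈ 𝒰 x ∩ V}.ncard : ℝ) / n))
        = fun n : ℕ => (cntU f 𝒰 x V n : ℝ)/n :=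
    fun V => funext fun n => by rw [ncard_eq_cntU]
  constructor
  · intro h V hV
    have h1 := h V hV
    rw [hfun V, pos_limsup_iff_freq] at h1
    exact h1
  · intro h V hV
    have h1 := h V hV
    rw [← pos_limsup_iff_freq, ← hfun V] at h1
    exact h1

lemma omegaPlusU_isClosed (x : X) : IsClosed (omegaPlusU f 𝒰 x) := by
  apply isClosed_of_closure_subset
  intro p hp
  rw [mem_omegaPlusU_iff]
  intro V hV
  obtain ⟨O, hOV, hO, hpO⟩ := _root_.mem_nhds_iff.1 hV
  obtain ⟨q, hq1, hq2⟩ := mem_closure_iff_nhds.1 hp O (hO.mem_nhds hpO)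
  have h1 := (mem_omegaPlusU_iff f 𝒰).1 hq2 O (hO.mem_nhds hq1)
  exact freqN_transfer 0 (fun n => by
    have := cntU_mono_set f 𝒰 x hOV n; omega) h1

lemma omegaPlusU_subset_omegaU (x : X) : omegaPlusU f 𝒰 x ⊆ omegaU f 𝒰 x := by
  intro p hp
  rw [omegaU_eq_iInter]
  refine mem_iInter.2 fun N => ?_
  rw [Metric.mem_closure_iff]
  intro ε hε
  have h1 := (mem_omegaPlusU_iff f 𝒰).1 hp (Metric.ball p ε) (Metric.ball_mem_nhds p hε)
  obtain ⟨δ, hδ, h⟩ := h1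
  by_contra hc
  push_neg at hc
  have hb : ∀ n, cntU f 𝒰 x (Metric.ball p ε) n ≤ N := by
    intro n
    unfold cntU
    calc (@Finset.filter _ (fun j => f^[j] x ∈ 𝒰 x ∩ Metric.ball p ε) (Classical.decPred _)
          (Finset.Icc 1 n)).card
        ≤ (Finset.Icc 1 N).card := by
          apply Finset.card_le_card
          intro j hj
          simp only [Finset.mem_filter, Finset.mem_Icc] at hj ⊢
          obtain ⟨⟨hj1, hj2⟩, hjm, hjb⟩ := hj
          refine ⟨hj1, ?_⟩
          by_contra hcc
          have hjN : N ≤ j := by omega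
          have h6 := hc (f^[j] x) ⟨j, ⟨hjN, hjm⟩, rfl⟩
          have h7 : dist p (f^[j] x) < ε := by rw [dist_comm]; exact mem_ball.1 hjb
          exact absurd h7 (not_lt.2 h6)
      _ ≤ N := by rw [Nat.card_Icc]; omega
  obtain ⟨n, hn, h2⟩ := h ⌈((N:ℝ)+1)/δ⌉₊
  have h3 : ((N:ℝ)+1)/δ ≤ n := le_trans (Nat.le_ceil _) (by exact_mod_cast hn)
  have h4 : ((N:ℝ)+1) ≤ δ * n := by rw [div_le_iff₀ hδ] at h3; linarith
  have h5 : (cntU f 𝒰 x (Metric.ball p ε) n : ℝ) ≤ N := by exact_mod_cast hb n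
  linarith

lemma cntU_comp {x : X} {N₀ : ℕ}
    (hN₀ : ∀ n ≥ N₀, 𝒰 x ∩ posOrbit f (f^[n] x) = 𝒰 (f x) ∩ posOrbit f (f^[n] x))
    (V : Set X) (n : ℕ) :
    cntU f 𝒰 x V n ≤ cntU f 𝒰 (f x) V n + (N₀+2) ∧
      cntU f 𝒰 (f x) V n ≤ cntU f 𝒰 x V n + (N₀+2) := by
  classical
  set P : ℕ → Prop := fun m => f^[m] x ∈ 𝒰 x ∩ V with hP
  set P' : ℕ → Prop := fun m => f^[m] x ∈ 𝒰 (f x) ∩ V with hP'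
  set Q : ℕ → Prop := fun j => f^[j] (f x) ∈ 𝒰 (f x) ∩ V with hQ
  have hQP' : ∀ j, Q j ↔ P' (j+1) := by
    intro j
    rw [hQ, hP']
    simp only [Function.iterate_succ_apply]
  have hPP' : ∀ m, N₀ ≤ m → (P m ↔ P' m) := by
    intro m hm
    rw [hP, hP']
    simp only [Set.mem_inter_iff]
    exact and_congr_left' (iff_mem_U f 𝒰 hN₀ hm)
  have hcx : cntU f 𝒰 x V n = (Finset.Icc 1 n |>.filter P).card := by
    unfold cntU; congr 1; apply Finset.filter_congr_decidable
  have hcfx : cntU f 𝒰 (f x) V n = (Finset.Icc 1 n |>.filter Q).card := by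
    unfold cntU; congr 1; apply Finset.filter_congr_decidable
  have himg : Finset.image (· + 1) ((Finset.Icc 1 n).filter Q)
      = (Finset.Icc 2 (n+1)).filter P' := by
    ext m
    simp only [Finset.mem_image, Finset.mem_filter, Finset.mem_Icc]
    constructor
    · rintro ⟨j, ⟨⟨hj1, hj2⟩, hq⟩, rfl⟩
      exact ⟨⟨by omega, by omega⟩, (hQP' j).1 hq⟩
    · rintro ⟨⟨hm1, hm2⟩, hp'⟩
      obtain ⟨j, rfl⟩ : ∃ j, m = j + 1 := ⟨m - 1, by omega⟩
      exact ⟨j, ⟨⟨by omega, by omega⟩, (hQP' j).2 hp'⟩, rfl⟩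
  have hcard1 : ((Finset.Icc 1 n).filter Q).card = ((Finset.Icc 2 (n+1)).filter P').card := by
    rw [← himg, Finset.card_image_of_injective _ (add_left_injective 1)]
  constructor
  · rw [hcx, hcfx, hcard1]
    have hsub : (Finset.Icc 1 n).filter P ⊆
        ((Finset.Icc 2 (n+1)).filter P') ∪ Finset.Icc 1 (N₀+1) := by
      intro j hj
      simp only [Finset.mem_union, Finset.mem_filter, Finset.mem_Icc] at hj ⊢
      by_cases hcc : j ≤ N₀ + 1
      · exact Or.inr ⟨hj.1.1, hcc⟩
      · exact Or.inl ⟨⟨by omega, by omega⟩, (hPP' j (by omega)).1 hj.2⟩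
    calc ((Finset.Icc 1 n).filter P).card
        ≤ (((Finset.Icc 2 (n+1)).filter P') ∪ Finset.Icc 1 (N₀+1)).card :=
          Finset.card_le_card hsub
      _ ≤ ((Finset.Icc 2 (n+1)).filter P').card + (Finset.Icc 1 (N₀+1)).card :=
          Finset.card_union_le _ _
      _ ≤ ((Finset.Icc 2 (n+1)).filter P').card + (N₀+2) := by
          rw [Nat.card_Icc]; omega
  · rw [hcx, hcfx, hcard1]
    have hsub : (Finset.Icc 2 (n+1)).filter P' ⊆
        (((Finset.Icc 1 n).filter P) ∪ Finset.Icc 1 (N₀+1)) ∪ {n+1} := by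
      intro m hm
      simp only [Finset.mem_union, Finset.mem_filter, Finset.mem_Icc,
        Finset.mem_singleton] at hm ⊢
      by_cases hcc : m ≤ N₀ + 1
      · exact Or.inl (Or.inr ⟨by omega, hcc⟩)
      · by_cases hc2 : m ≤ n
        · exact Or.inl (Or.inl ⟨⟨by omega, hc2⟩, (hPP' m (by omega)).2 hm.2⟩)
        · exact Or.inr (by omega)
    calc ((Finset.Icc 2 (n+1)).filter P').card
        ≤ ((((Finset.Icc 1 n).filter P) ∪ Finset.Icc 1 (N₀+1)) ∪ {n+1}).card :=
          Finset.card_le_card hsub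
      _ ≤ (((Finset.Icc 1 n).filter P) ∪ Finset.Icc 1 (N₀+1)).card + ({n+1} : Finset ℕ).card :=
          Finset.card_union_le _ _
      _ ≤ (((Finset.Icc 1 n).filter P).card + (Finset.Icc 1 (N₀+1)).card) + 1 := by
          rw [Finset.card_singleton]
          exact Nat.add_le_add_right (Finset.card_union_le _ _) 1
      _ ≤ ((Finset.Icc 1 n).filter P).card + (N₀+2) := by
          rw [Nat.card_Icc]; omega

lemma omegaPlusU_apply_eq {x : X} {N₀ : ℕ}
    (hN₀ : ∀ n ≥ N₀, 𝒰 x ∩ posOrbit f (f^[n] x) = 𝒰 (f x) ∩ posOrbit f (f^[n] x)) :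
    omegaPlusU f 𝒰 (f x) = omegaPlusU f 𝒰 x := by
  ext p
  rw [mem_omegaPlusU_iff, mem_omegaPlusU_iff]
  constructor
  · intro h V hV
    exact freqN_transfer (N₀+2) (fun n => (cntU_comp f 𝒰 hN₀ V n).2) (h V hV)
  · intro h V hV
    exact freqN_transfer (N₀+2) (fun n => (cntU_comp f 𝒰 hN₀ V n).1) (h V hV)

end Aux

/-! ### The ergodic selection lemma -/

lemma exists_ae_const {X : Type*} [MetricSpace X] [TopologicalSpace.SeparableSpace X]
    [MeasurableSpace X]
    (f : X → X) (μ : Measure X) (U : Set X) (hU : ErgodicComponent f μ U)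
    (g : X → Set X) (hgc : ∀ x ∈ U, IsClosed (g x)) (hgi : ∀ x ∈ U, g (f x) = g x) :
    ∃ S : Set X, IsClosed S ∧ ∀ᵐ x ∂μ, x ∈ U → g x = S := by
  haveI : SecondCountableTopology X := UniformSpace.secondCountable_of_separable X
  obtain ⟨b, hbc, -, hbb⟩ := TopologicalSpace.exists_countable_basis X
  obtain ⟨e, he⟩ := Set.Countable.exists_eq_range (hbc.insert ∅) (Set.insert_nonempty _ _)
  have heo : ∀ n, IsOpen (e n) := by
    intro n
    have h : e n ∈ insert ∅ b := he ▸ Set.mem_range_self n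
    rcases h with h | h
    · rw [h]; exact isOpen_empty
    · exact hbb.isOpen h
  have hebasis : ∀ (p : X) (V : Set X), V ∈ 𝓝 p → ∃ n, p ∈ e n ∧ e n ⊆ V := by
    intro p V hV
    obtain ⟨t, htb, hpt, htV⟩ := hbb.mem_nhds_iff.1 hV
    have h : t ∈ range e := he ▸ Set.mem_insert_of_mem _ htb
    obtain ⟨n, rfl⟩ := h
    exact ⟨n, hpt, htV⟩
  set W : ℕ → Set X := fun n => {x | x ∈ U ∧ (g x ∩ e n).Nonempty} with hW
  have hWU : ∀ n, W n ⊆ U := fun n x hx => hx.1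
  have hWinv : ∀ n, f ⁻¹' W n = W n := by
    intro n; ext x
    have hxU : f x ∈ U ↔ x ∈ U := by
      have h := Set.ext_iff.1 hU.1 x
      simpa using h
    simp only [mem_preimage, hW, mem_setOf_eq]
    constructor
    · rintro ⟨h1, h2⟩
      have hx := hxU.1 h1
      exact ⟨hx, by rwa [hgi x hx] at h2⟩
    · rintro ⟨h1, h2⟩
      exact ⟨hxU.2 h1, by rwa [hgi x h1]⟩
  set S : Set X := {p | ∀ n, p ∈ e n → μ (U \ W n) = 0} with hS
  have hScl : IsClosed S := by
    rw [← isOpen_compl_iff]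
    have h : Sᶜ = ⋃ n ∈ {n : ℕ | μ (U \ W n) ≠ 0}, e n := by
      ext p
      simp only [hS, mem_compl_iff, mem_setOf_eq, not_forall, mem_iUnion]
      constructor
      · rintro ⟨n, h1, h2⟩; exact ⟨n, h2, h1⟩
      · rintro ⟨n, h2, h1⟩; exact ⟨n, h1, h2⟩
    rw [h]
    exact isOpen_biUnion fun n _ => heo n
  set bad : ℕ → Set X := fun n => if μ (U \ W n) = 0 then U \ W n else W n with hbad
  have hbad0 : ∀ n, μ (bad n) = 0 := by
    intro n
    by_cases h : μ (U \ W n) = 0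
    · simp only [hbad]; rw [if_pos h]; exact h
    · rcases hU.2.2 (W n) (hWU n) (hWinv n) with h1 | h1
      · simp only [hbad]; rw [if_neg h]; exact h1
      · exact absurd h1 h
  have hae : ∀ᵐ x ∂μ, ∀ n, x ∉ bad n := by
    rw [MeasureTheory.ae_all_iff]
    intro n
    rw [MeasureTheory.ae_iff]
    simpa using hbad0 n
  refine ⟨S, hScl, ?_⟩
  filter_upwards [hae] with x hx hxU
  apply Set.Subset.antisymm
  · intro p hp n hpn
    by_contra h
    have hb : bad n = W n := by simp only [hbad]; rw [if_neg h]
    exact hx n (hb ▸ ⟨hxU, ⟨p, hp, hpn⟩⟩)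
  · intro p hp
    rw [← (hgc x hxU).closure_eq]
    rw [mem_closure_iff_nhds]
    intro V hV
    obtain ⟨n, hpn, heV⟩ := hebasis p V hV
    have h0 := hp n hpn
    have hb : bad n = U \ W n := by simp only [hbad]; rw [if_pos h0]
    have hxW : x ∈ W n := by
      by_contra hcc
      exact hx n (hb ▸ ⟨hxU, hcc⟩)
    obtain ⟨q, hq1, hq2⟩ := hxW.2
    exact ⟨q, heV hq2, hq1⟩

lemma exists_mem_of_ae {X : Type*} [MeasurableSpace X] (μ : Measure X) (U : Set X)
    (h : 0 < μ U) {p : X → Prop} (hp : ∀ᵐ x ∂μ, p x) : ∃ x ∈ U, p x := by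
  by_contra hc
  push_neg at hc
  have h1 : U ⊆ {x | ¬ p x} := fun x hx => hc x hx
  have h2 := measure_mono (μ := μ) h1
  rw [MeasureTheory.ae_iff] at hp
  rw [hp] at h2
  exact h.ne' (le_antisymm h2 zero_le)

/-- **Omega-limit sets of asymptotically invariant collections.** Let `𝒰` be an
asymptotically invariant collection on a `μ`-ergodic component `U` and let `A`
be the attractor associated to `U`.  Then there is a compact `A_𝒰 ⊆ A` with
`ω_{f,𝒰}(x) = A_𝒰` for `μ`-a.e. `x ∈ U`; and if `𝒰` has positive frequency,
there is also a compact `A_{+,𝒰} ⊆ A_𝒰` with `ω_{+,f,𝒰}(x) = A_{+,𝒰}` for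
`μ`-a.e. `x ∈ U`. -/
theorem omega_limit_of_asymp_invariant
    {X : Type*} [MetricSpace X] [CompactSpace X] [TopologicalSpace.SeparableSpace X]
    [MeasurableSpace X] [BorelSpace X]
    (f : X → X) (hf : Measurable f) (μ : Measure X) [IsFiniteMeasure μ]
    (U : Set X) (hU : ErgodicComponent f μ U)
    (𝒰 : X → Set X) (h𝒰 : AsympInvariant f U 𝒰)
    (A : Set X) (hA : IsAttractor f μ A)
    (hAeq : ∀ᵐ x ∂μ, x ∈ U → omegaLimitPt f x = A) :
    ∃ AU : Set X, IsCompact AU ∧ AU ⊆ A ∧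
      (∀ᵐ x ∂μ, x ∈ U → omegaU f 𝒰 x = AU) ∧
      ((∀ x ∈ U, PosFreq f 𝒰 x) →
        ∃ AP : Set X, IsCompact AP ∧ AP ⊆ AU ∧
          ∀ᵐ x ∂μ, x ∈ U → omegaPlusU f 𝒰 x = AP) := by
  classical
  obtain ⟨hsub, hinf, hasy⟩ := h𝒰
  have hginv : ∀ x ∈ U, omegaU f 𝒰 (f x) = omegaU f 𝒰 x := by
    intro x hx
    obtain ⟨N₀, hN₀⟩ := hasy x hx
    exact omegaU_apply_eq f 𝒰 hN₀
  have hpinv : ∀ x ∈ U, omegaPlusU f 𝒰 (f x) = omegaPlusU f 𝒰 x := by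
    intro x hx
    obtain ⟨N₀, hN₀⟩ := hasy x hx
    exact omegaPlusU_apply_eq f 𝒰 hN₀
  obtain ⟨AU, hAUcl, hAUae⟩ := exists_ae_const f μ U hU (omegaU f 𝒰)
    (fun x _ => omegaU_isClosed f 𝒰 x) hginv
  obtain ⟨AP, hAPcl, hAPae⟩ := exists_ae_const f μ U hU (omegaPlusU f 𝒰)
    (fun x _ => omegaPlusU_isClosed f 𝒰 x) hpinv
  obtain ⟨x, hxU, hx1, hx2, hx3⟩ :=
    exists_mem_of_ae μ U hU.2.1 (hAUae.and (hAPae.and hAeq))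
  have hAUA : AU ⊆ A := by
    rw [← hx1 hxU, ← hx3 hxU]
    exact omegaU_subset_omegaLimitPt f 𝒰 x
  have hAPU : AP ⊆ AU := by
    rw [← hx2 hxU, ← hx1 hxU]
    exact omegaPlusU_subset_omegaU f 𝒰 x
  exact ⟨AU, hAUcl.isCompact, hAUA, hAUae,
    fun _ => ⟨AP, hAPcl.isCompact, hAPU, hAPae⟩⟩
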